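/- Let f(z) = ∑_{j=0}^{t−1} f_j z^j be a polynomial with coefficients f_j ∈ {1,−1}, and suppose f_j = f_k whenever j ≡ k (mod m) for a positive integer m. Then the L⁴ norm of f on the unit circle satisfies ||f||₄⁴ ≥ ∑_{n∈ℤ} max(0, t−|n|·m)². -/

import Mathlib

open Complex intervalIntegral Finset

private lemma littlewood_orth (d : ℤ) :
    (∫ θ in (0:ℝ)..(2*Real.pi), Complex.exp ((d:ℂ) * θ * Complex.I))
    = if d = 0 then (2*Real.pi : ℂ) else 0 := by
  rcases eq_or_ne d 0 with h | h
  · simp [h]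
  · have hc : (d:ℂ) * Complex.I ≠ 0 := by
      simp [Complex.ext_iff, h, Complex.I_ne_zero]
    have hrw : ∀ θ : ℝ, (d:ℂ) * θ * Complex.I = ((d:ℂ) * Complex.I) * θ := by intro θ; ring
    simp_rw [hrw]
    rw [integral_exp_mul_complex hc, if_neg h]
    have : Complex.exp ((d:ℂ) * Complex.I * (2*Real.pi)) = 1 := by
      have := Complex.exp_int_mul_two_pi_mul_I d
      rw [← this]; ring_nf
    simp [this]

private lemma littlewood_sq_integral (A : Finset (ℕ × ℕ)) (w : ℕ × ℕ → ℂ) (e : ℕ × ℕ → ℤ) :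
    (∫ θ in (0:ℝ)..(2*Real.pi),
        (∑ x ∈ A, w x * Complex.exp ((e x : ℂ) * θ * Complex.I))^2)
    = ∑ x ∈ A, ∑ y ∈ A, (w x * w y) * (if e x + e y = 0 then (2*Real.pi:ℂ) else 0) := by
  have hexp : ∀ θ : ℝ, (∑ x ∈ A, w x * Complex.exp ((e x : ℂ) * θ * Complex.I))^2
      = ∑ x ∈ A, ∑ y ∈ A, (w x * w y) * Complex.exp (((e x + e y : ℤ) : ℂ) * θ * Complex.I) := by
    intro θ
    rw [sq, Finset.sum_mul_sum]
    refine Finset.sum_congr rfl fun x _ => Finset.sum_congr rfl fun y _ => ?_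
    rw [mul_mul_mul_comm, ← Complex.exp_add]
    congr 1
    push_cast; ring
  simp_rw [hexp]
  rw [intervalIntegral.integral_finset_sum]
  · refine Finset.sum_congr rfl fun x _ => ?_
    rw [intervalIntegral.integral_finset_sum]
    · exact Finset.sum_congr rfl fun y _ => by
        rw [intervalIntegral.integral_const_mul, littlewood_orth]
    · intro y _
      apply Continuous.intervalIntegrable
      fun_prop
  · intro x _
    apply Continuous.intervalIntegrable
    apply continuous_finset_sum
    intro y _
    fun_prop

theorem littlewood_periodic_L4_lower_bound (t m : ℕ) (ht : 0 < t) (hm : 0 < m)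
    (f : Polynomial ℂ)
    (hcoeff : ∀ j < t, f.coeff j = 1 ∨ f.coeff j = -1)
    (hdeg : ∀ j, t ≤ j → f.coeff j = 0)
    (hper : ∀ j k, j < t → k < t → j % m = k % m → f.coeff j = f.coeff k) :
    (1 / (2 * Real.pi)) *
      ∫ θ in (0:ℝ)..(2 * Real.pi), ‖f.eval (Complex.exp (θ * Complex.I))‖ ^ 4
      ≥ ∑' n : ℤ, (max 0 ((t : ℝ) - |(n : ℝ)| * m)) ^ 2 := by
  set A : Finset (ℕ × ℕ) := Finset.range t ×ˢ Finset.range t with hA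
  set w : ℕ × ℕ → ℂ := fun x => f.coeff x.1 * f.coeff x.2 with hw
  set e : ℕ × ℕ → ℤ := fun x => (x.1 : ℤ) - x.2 with he
  set D : Finset ℤ := Finset.Icc (-(t:ℤ)) (t:ℤ) with hD
  set c : ℤ → ℂ := fun d => ∑ x ∈ A, if e x = d then w x else 0 with hc
  -- basic coefficient facts
  have hconj : ∀ j < t, (starRingEnd ℂ) (f.coeff j) = f.coeff j := by
    intro j hj; rcases hcoeff j hj with h | h <;> simp [h]
  have hsq : ∀ j < t, f.coeff j * f.coeff j = 1 := by
    intro j hj; rcases hcoeff j hj with h | h <;> simp [h]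
  have hnd : f.natDegree < t := by
    by_contra h
    have h0 : f.coeff 0 ≠ 0 := by rcases hcoeff 0 ht with h' | h' <;> simp [h']
    have hf0 : f ≠ 0 := fun hf => h0 (by simp [hf])
    exact Polynomial.leadingCoeff_ne_zero.mpr hf0 (hdeg _ (not_lt.mp h))
  -- evaluation as exponential sum
  have hF : ∀ θ : ℝ, f.eval (Complex.exp (θ * Complex.I))
      = ∑ j ∈ Finset.range t, f.coeff j * Complex.exp (((j:ℤ):ℂ) * θ * Complex.I) := by
    intro θ
    rw [Polynomial.eval_eq_sum_range' hnd]
    refine Finset.sum_congr rfl fun j _ => ?_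
    rw [← Complex.exp_nat_mul]
    push_cast
    ring_nf
  -- product with conjugate
  have hFF : ∀ θ : ℝ, f.eval (Complex.exp (θ * Complex.I)) *
        (starRingEnd ℂ) (f.eval (Complex.exp (θ * Complex.I)))
      = ∑ x ∈ A, w x * Complex.exp ((e x : ℂ) * θ * Complex.I) := by
    intro θ
    rw [hF, map_sum, Finset.sum_mul_sum, hA, Finset.sum_product]
    refine Finset.sum_congr rfl fun j hj => Finset.sum_congr rfl fun k hk => ?_
    rw [map_mul, hconj k (Finset.mem_range.mp hk), ← Complex.exp_conj]
    have h1 : (starRingEnd ℂ) (((k:ℤ):ℂ) * θ * Complex.I) = -(((k:ℤ):ℂ) * θ * Complex.I) := by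
      simp [Complex.ext_iff]
    rw [h1, mul_mul_mul_comm, ← Complex.exp_add, hw, he]
    simp only
    congr 1
    push_cast
    ring
  -- membership of differences in D
  have hmem : ∀ x ∈ A, e x ∈ D := by
    intro x hx
    rw [hA, Finset.mem_product] at hx
    rw [hD, Finset.mem_Icc]
    have h1 := Finset.mem_range.mp hx.1
    have h2 := Finset.mem_range.mp hx.2
    rw [he]; constructor <;> simp <;> omega
  -- grouping of the quadruple sum
  have hGroup : (∑ x ∈ A, ∑ y ∈ A, (w x * w y) * (if e x + e y = 0 then (2*Real.pi:ℂ) else 0))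
      = 2*Real.pi * ∑ d ∈ D, c d * c (-d) := by
    calc (∑ x ∈ A, ∑ y ∈ A, (w x * w y) * (if e x + e y = 0 then (2*Real.pi:ℂ) else 0))
        = ∑ x ∈ A, (2*Real.pi) * (w x * c (-(e x))) := by
          refine Finset.sum_congr rfl fun x _ => ?_
          rw [hc, Finset.mul_sum, Finset.mul_sum]
          refine Finset.sum_congr rfl fun y _ => ?_
          by_cases h : e y = -(e x)
          · rw [if_pos h, if_pos (by omega : e x + e y = 0)]; ring
          · rw [if_neg h, if_neg (by omega : ¬ (e x + e y = 0))]; ring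
      _ = 2*Real.pi * ∑ x ∈ A, ∑ d ∈ D, if e x = d then w x * c (-d) else 0 := by
          rw [← Finset.mul_sum]
          congr 1
          refine Finset.sum_congr rfl fun x hx => ?_
          rw [Finset.sum_ite_eq D (e x) (fun d => w x * c (-d)), if_pos (hmem x hx)]
      _ = 2*Real.pi * ∑ d ∈ D, c d * c (-d) := by
          congr 1
          rw [Finset.sum_comm]
          refine Finset.sum_congr rfl fun d _ => ?_
          rw [hc]
          simp only
          rw [Finset.sum_mul]
          refine Finset.sum_congr rfl fun x _ => ?_
          by_cases h : e x = d
          · rw [if_pos h, if_pos h]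
          · rw [if_neg h, if_neg h, zero_mul]
  -- symmetry of c
  have hsym : ∀ d, c (-d) = c d := by
    intro d
    rw [hc]
    simp only
    apply Finset.sum_nbij' (fun x => Prod.swap x) (fun x => Prod.swap x)
    · intro x hx; rw [hA] at hx ⊢; rw [Finset.mem_product] at hx ⊢; exact ⟨hx.2, hx.1⟩
    · intro x hx; rw [hA] at hx ⊢; rw [Finset.mem_product] at hx ⊢; exact ⟨hx.2, hx.1⟩
    · intro x _; simp
    · intro x _; simp
    · intro x _
      rw [he, hw]
      simp only [Prod.fst_swap, Prod.snd_swap]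
      by_cases h : (x.1:ℤ) - x.2 = -d
      · rw [if_pos h, if_pos (by omega), mul_comm]
      · rw [if_neg h, if_neg (by omega)]
  -- realness of c
  have hreal : ∀ d, (starRingEnd ℂ) (c d) = c d := by
    intro d
    rw [hc]
    simp only
    rw [map_sum]
    refine Finset.sum_congr rfl fun x hx => ?_
    rw [hA, Finset.mem_product] at hx
    by_cases h : e x = d
    · rw [if_pos h, hw]
      simp only
      rw [map_mul, hconj _ (Finset.mem_range.mp hx.1), hconj _ (Finset.mem_range.mp hx.2)]
    · rw [if_neg h, map_zero]
  -- values of c on multiples of m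
  have hval : ∀ u : ℕ, u < t → m ∣ u → c (u:ℤ) = ((t - u : ℕ) : ℂ) := by
    intro u hu hdvd
    rw [hc, hA]
    simp only
    rw [Finset.sum_product_right]
    have step1 : ∀ k ∈ Finset.range t,
        (∑ j ∈ Finset.range t, if e (j, k) = (u:ℤ) then w (j, k) else 0)
        = if k + u < t then (1:ℂ) else 0 := by
      intro k hk
      have hcond : ∀ j, (e (j, k) = (u:ℤ)) ↔ j = k + u := by
        intro j; rw [he]; simp only; omega
      simp_rw [hcond]
      rw [Finset.sum_ite_eq' (Finset.range t) (k + u) (fun j => w (j, k))]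
      by_cases hlt : k + u < t
      · rw [if_pos (Finset.mem_range.mpr hlt), if_pos hlt, hw]
        simp only
        have : f.coeff (k + u) = f.coeff k := by
          apply hper _ _ hlt (Finset.mem_range.mp hk)
          obtain ⟨q, rfl⟩ := hdvd
          simp [Nat.add_mul_mod_self_left]
        rw [this, hsq k (Finset.mem_range.mp hk)]
      · rw [if_neg (by simpa using hlt), if_neg hlt]
    rw [Finset.sum_congr rfl step1]
    have hiff : ∀ k, (k + u < t) ↔ k < t - u := by omega
    simp_rw [hiff]
    rw [Finset.sum_boole]
    have hfil : (Finset.range t).filter (fun x => x < t - u) = Finset.range (t - u) := by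
      ext x; simp only [Finset.mem_filter, Finset.mem_range]; omega
    rw [hfil, Finset.card_range]
  -- the integral identity
  set I : ℝ := ∫ θ in (0:ℝ)..(2 * Real.pi), ‖f.eval (Complex.exp (θ * Complex.I))‖ ^ 4 with hIdef
  have hptwise : ∀ θ : ℝ, ((‖f.eval (Complex.exp (θ * Complex.I))‖ ^ 4 : ℝ) : ℂ)
      = (f.eval (Complex.exp (θ * Complex.I)) *
          (starRingEnd ℂ) (f.eval (Complex.exp (θ * Complex.I))))^2 := by
    intro θ
    rw [Complex.mul_conj]
    rw [Complex.normSq_eq_norm_sq]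
    push_cast
    ring
  have hIC : (I : ℂ) = 2*Real.pi * ∑ d ∈ D, c d * c (-d) := by
    calc (I : ℂ)
        = ∫ θ in (0:ℝ)..(2 * Real.pi),
            ((‖f.eval (Complex.exp (θ * Complex.I))‖ ^ 4 : ℝ) : ℂ) := by
          rw [hIdef, intervalIntegral.integral_ofReal]
      _ = ∫ θ in (0:ℝ)..(2 * Real.pi),
            (∑ x ∈ A, w x * Complex.exp ((e x : ℂ) * θ * Complex.I))^2 := by
          apply intervalIntegral.integral_congr
          intro θ _
          exact (hptwise θ).trans (by rw [hFF θ])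
      _ = ∑ x ∈ A, ∑ y ∈ A, (w x * w y) * (if e x + e y = 0 then (2*Real.pi:ℂ) else 0) :=
          littlewood_sq_integral A w e
      _ = 2*Real.pi * ∑ d ∈ D, c d * c (-d) := hGroup
  -- now pass to real and conclude
  set cR : ℤ → ℝ := fun d => (c d).re with hcR
  have hcofR : ∀ d, c d = ((cR d : ℝ) : ℂ) := fun d =>
    (Complex.conj_eq_iff_re.mp (hreal d)).symm
  have hI' : I = 2*Real.pi * ∑ d ∈ D, (cR d)^2 := by
    have : (I:ℂ) = (((2*Real.pi * ∑ d ∈ D, (cR d)^2 : ℝ)):ℂ) := by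
      rw [hIC]
      push_cast
      refine congrArg _ (Finset.sum_congr rfl fun d _ => ?_)
      rw [hsym d, hcofR d]
      push_cast; ring
    exact_mod_cast this
  have hpi : (0:ℝ) < Real.pi := Real.pi_pos
  rw [hI', ge_iff_le]
  have hlhs : (1 / (2 * Real.pi)) * (2*Real.pi * ∑ d ∈ D, (cR d)^2) = ∑ d ∈ D, (cR d)^2 := by
    field_simp
  rw [hlhs]
  -- finite support of the tsum
  set N : ℕ := (t-1)/m with hN
  have hNm : N * m ≤ t - 1 := by
    rw [hN]; exact Nat.div_mul_le_self _ _
  have hNm2 : t ≤ (N+1) * m := by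
    have h1 : t - 1 < (N+1) * m := by
      rw [hN]
      exact (Nat.div_lt_iff_lt_mul hm).mp (Nat.lt_succ_self ((t-1)/m))
    omega
  set S : Finset ℤ := Finset.Icc (-(N:ℤ)) (N:ℤ) with hS
  have hzero : ∀ n : ℤ, n ∉ S → (max 0 ((t : ℝ) - |(n : ℝ)| * m)) ^ 2 = 0 := by
    intro n hn
    rw [hS, Finset.mem_Icc] at hn
    have habs : ((N:ℤ)+1) ≤ |n| := by
      rcases abs_cases n with ⟨h1, h2⟩ | ⟨h1, h2⟩ <;> rw [h1] <;> omega
    have h1 : ((t:ℝ)) ≤ |(n:ℝ)| * m := by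
      have : ((N:ℝ)+1) * m ≤ |(n:ℝ)| * m := by
        apply mul_le_mul_of_nonneg_right _ (by positivity)
        have : (((N:ℤ)+1 : ℤ) : ℝ) ≤ ((|n| : ℤ) : ℝ) := by exact_mod_cast habs
        simpa [Int.cast_abs] using this
      have h2 : (t:ℝ) ≤ ((N:ℝ)+1) * m := by exact_mod_cast hNm2
      linarith
    have : max 0 ((t : ℝ) - |(n : ℝ)| * m) = 0 := by
      rw [max_eq_left]; linarith
    rw [this]; norm_num
  rw [tsum_eq_sum hzero]
  -- term values
  have hterm : ∀ n ∈ S, (max 0 ((t : ℝ) - |(n : ℝ)| * m)) ^ 2 = (cR (n * m))^2 := by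
    intro n hn
    rw [hS, Finset.mem_Icc] at hn
    set u : ℕ := n.natAbs * m with hu
    have hut : u < t := by
      have : n.natAbs ≤ N := by omega
      have := Nat.mul_le_mul_right m this
      omega
    have hcu : c (u:ℤ) = ((t - u : ℕ) : ℂ) := hval u hut ⟨n.natAbs, mul_comm _ _⟩
    have hnm : c (n * m) = ((t - u : ℕ) : ℂ) := by
      rcases le_or_gt 0 n with h | h
      · have huu : (n * m : ℤ) = (u : ℤ) := by
          rw [hu]; push_cast; rw [abs_of_nonneg h]
        rw [huu, hcu]
      · have huu : (n * m : ℤ) = -(u : ℤ) := by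
          rw [hu]; push_cast; rw [abs_of_neg h]; ring
        rw [huu, hsym, hcu]
    have hcRnm : cR (n * m) = ((t - u : ℕ) : ℝ) := by
      rw [hcR]; simp only; rw [hnm]; exact_mod_cast rfl
    have habsr : |(n:ℝ)| * m = (u : ℝ) := by
      rw [hu]; push_cast [Nat.cast_natAbs]; ring
    have hmax : max 0 ((t : ℝ) - |(n : ℝ)| * m) = ((t - u : ℕ) : ℝ) := by
      rw [habsr, max_eq_right]
      · rw [Nat.cast_sub (le_of_lt hut)]
      · rw [Nat.cast_sub (le_of_lt hut)] at *
        have : (u:ℝ) ≤ (t:ℝ) := by exact_mod_cast (le_of_lt hut)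
        linarith
    rw [hmax, hcRnm]
  rw [Finset.sum_congr rfl hterm]
  -- injection into D
  have hinj : ∀ x ∈ S, ∀ y ∈ S, x * (m:ℤ) = y * (m:ℤ) → x = y := by
    intro x _ y _ h
    have : (m:ℤ) ≠ 0 := by exact_mod_cast hm.ne'
    exact mul_right_cancel₀ this h
  have himg : ∑ n ∈ S, cR (n * (m:ℤ)) ^ 2
      = ∑ d ∈ S.image (fun n => n * (m:ℤ)), cR d ^ 2 :=
    (Finset.sum_image (g := fun n => n * (m:ℤ)) (f := fun d => cR d ^ 2) hinj).symm
  rw [himg]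
  apply Finset.sum_le_sum_of_subset_of_nonneg
  · intro d hd
    rw [Finset.mem_image] at hd
    obtain ⟨n, hn, rfl⟩ := hd
    rw [hS, Finset.mem_Icc] at hn
    rw [hD, Finset.mem_Icc]
    have hNmZ : (N:ℤ) * m ≤ (t:ℤ) - 1 := by
      have : ((N * m : ℕ) : ℤ) ≤ ((t - 1 : ℕ) : ℤ) := by exact_mod_cast hNm
      push_cast at this
      omega
    constructor
    · nlinarith [hn.1, hn.2, (by exact_mod_cast hm : (0:ℤ) < m)]
    · nlinarith [hn.1, hn.2, (by exact_mod_cast hm : (0:ℤ) < m)]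
  · intro d _ _
    positivity
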